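/- Let M ≥ 1 be an integer, let ε₁, …, ε_M be real numbers with ε_m > 0 for all m, and let ε̃ be real with ε̃ + ε₁ + ⋯ + ε_M < -1. Then the function (x̃, x₁, …, x_M) ↦ e^{ε̃x̃ + Σ_{m=1}^M ε_m x_m} · (e^{x̃} - Σ_{m=1}^M e^{x_m} - 1)^+ is integrable on ℝ^{M+1} (belongs to L¹(ℝ^{M+1})). -/
import Mathlib

open MeasureTheory Set

lemma exp_mul_integrableOn_Iic {a : ℝ} (ha : 0 < a) :
    IntegrableOn (fun t : ℝ => Real.exp (a * t)) (Iic (0:ℝ)) := by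
  rw [← (Measure.measurePreserving_neg (volume : Measure ℝ)).integrableOn_comp_preimage
      (Homeomorph.neg ℝ).measurableEmbedding]
  simp only [Function.comp_def, neg_preimage, neg_Iic, neg_zero, mul_neg, ← neg_mul]
  rw [integrableOn_Ici_iff_integrableOn_Ioi]
  exact exp_neg_integrableOn_Ioi 0 ha

lemma exp_mul_integrableOn_Ici {a : ℝ} (ha : a < 0) :
    IntegrableOn (fun t : ℝ => Real.exp (a * t)) (Ici (0:ℝ)) := by
  rw [integrableOn_Ici_iff_integrableOn_Ioi]
  have : ∀ t : ℝ, a * t = -(-a) * t := by intro t; ring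
  simp_rw [this]
  exact exp_neg_integrableOn_Ioi 0 (by linarith)

/-- For `ε_m > 0` and `ε̃ + Σ_m ε_m < -1`, the function
`(x, x̃) ↦ e^{ε̃x̃ + Σ_m ε_m x_m} · (e^{x̃} - Σ_m e^{x_m} - 1)⁺` is in `L¹(ℝ^{M+1})`. -/
theorem multiasset_spread_payoff_exp_weight_integrable
    (M : ℕ) (hM : 1 ≤ M) (ε : Fin M → ℝ) (hε : ∀ m, 0 < ε m)
    (εt : ℝ) (hsum : εt + ∑ m, ε m < -1) :
    Integrable
      (fun x : (Fin M → ℝ) × ℝ =>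
        Real.exp (εt * x.2 + ∑ m, ε m * x.1 m) *
          max (Real.exp x.2 - ∑ m, Real.exp (x.1 m) - 1) 0)
      (volume : Measure ((Fin M → ℝ) × ℝ)) := by
  set f : (Fin M → ℝ) × ℝ → ℝ := fun x =>
    Real.exp (εt * x.2 + ∑ m, ε m * x.1 m) *
      max (Real.exp x.2 - ∑ m, Real.exp (x.1 m) - 1) 0 with hf
  set c : ℝ := εt + (∑ m, ε m) + 1 with hcdef
  have hc0 : c < 0 := by simp only [hcdef]; linarith
  -- continuity / measurability of f
  have hfc : Continuous f := by
    apply Continuous.mul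
    · apply Real.continuous_exp.comp
      exact (continuous_const.mul continuous_snd).add
        (continuous_finset_sum _ fun m _ =>
          continuous_const.mul ((continuous_apply m).comp continuous_fst))
    · apply Continuous.max _ continuous_const
      exact ((Real.continuous_exp.comp continuous_snd).sub
        (continuous_finset_sum _ fun m _ =>
          Real.continuous_exp.comp ((continuous_apply m).comp continuous_fst))).sub
        continuous_const
  -- the shear map
  have hS : MeasurePreserving
      (fun p : ℝ × (Fin M → ℝ) => (p.1, p.2 + fun _ => p.1))
      ((volume : Measure ℝ).prod (volume : Measure (Fin M → ℝ)))
      ((volume : Measure ℝ).prod (volume : Measure (Fin M → ℝ))) := by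
    exact MeasurePreserving.skew_product (g := fun (a : ℝ) (x : Fin M → ℝ) => x + fun _ => a)
      (MeasurePreserving.id _)
      (measurable_snd.add (measurable_pi_lambda _ fun _ => measurable_fst))
      (Filter.Eventually.of_forall fun y =>
        (measurePreserving_add_right (volume : Measure (Fin M → ℝ)) (fun _ => y)).map_eq)
  have hT : MeasurePreserving
      (fun p : (Fin M → ℝ) × ℝ => ((p.1 + fun _ => p.2 : Fin M → ℝ), p.2))
      ((volume : Measure (Fin M → ℝ)).prod (volume : Measure ℝ))
      ((volume : Measure (Fin M → ℝ)).prod (volume : Measure ℝ)) :=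
    Measure.measurePreserving_swap.comp (hS.comp Measure.measurePreserving_swap)
  rw [Measure.volume_eq_prod]
  rw [← hT.integrable_comp (hfc.aestronglyMeasurable)]
  -- the dominating function
  set F : Fin M → ℝ → ℝ := fun m => indicator (Iic (0:ℝ)) (fun t => Real.exp (ε m * t)) with hF
  set H : ℝ → ℝ := fun y => indicator (Ici (0:ℝ)) (fun y => Real.exp (c * y)) y with hH
  have hFint : ∀ m, Integrable (F m) := fun m =>
    (integrable_indicator_iff measurableSet_Iic).2 (exp_mul_integrableOn_Iic (hε m))
  have hHint : Integrable H :=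
    (integrable_indicator_iff measurableSet_Ici).2 (exp_mul_integrableOn_Ici hc0)
  have hg : Integrable (fun p : (Fin M → ℝ) × ℝ => (∏ m, F m (p.1 m)) * H p.2)
      (((volume : Measure (Fin M → ℝ))).prod (volume : Measure ℝ)) :=
    Integrable.mul_prod (Integrable.fintype_prod hFint) hHint
  apply hg.mono ((hfc.measurable.comp hT.measurable).aestronglyMeasurable)
  apply Filter.Eventually.of_forall
  rintro ⟨x, y⟩
  simp only [Function.comp_apply, hf, Pi.add_apply, Real.norm_eq_abs]
  have hFnn : ∀ m t, 0 ≤ F m t := fun m t =>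
    indicator_nonneg (fun s _ => (Real.exp_pos _).le) t
  have hHnn : ∀ t, 0 ≤ H t := fun t => indicator_nonneg (fun s _ => (Real.exp_pos _).le) t
  have hRHSnn : 0 ≤ (∏ m, F m (x m)) * H y :=
    mul_nonneg (Finset.prod_nonneg fun m _ => hFnn m _) (hHnn y)
  rw [abs_of_nonneg hRHSnn]
  rcases le_or_gt (Real.exp y - ∑ m, Real.exp (x m + y) - 1) 0 with h | h
  · rw [max_eq_right h]
    simpa using hRHSnn
  · rw [max_eq_left h.le]
    -- nonnegativity of LHS lets us drop abs
    have hlhs : 0 ≤ Real.exp (εt * y + ∑ m, ε m * (x m + y)) *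
        (Real.exp y - ∑ m, Real.exp (x m + y) - 1) :=
      mul_nonneg (Real.exp_pos _).le h.le
    rw [abs_of_nonneg hlhs]
    -- key facts: each x m ≤ 0 and y ≥ 0
    have hsum_nn : (0:ℝ) ≤ ∑ m, Real.exp (x m + y) :=
      Finset.sum_nonneg fun m _ => (Real.exp_pos _).le
    have hxm : ∀ m, x m ≤ 0 := by
      intro m
      by_contra hxm
      push_neg at hxm
      have h1 : Real.exp (x m + y) ≤ ∑ k, Real.exp (x k + y) :=
        Finset.single_le_sum (f := fun k => Real.exp (x k + y)) (fun k _ => (Real.exp_pos _).le) (Finset.mem_univ m)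
      have h2 : Real.exp y < Real.exp (x m + y) := by
        apply Real.exp_lt_exp.2; linarith
      linarith
    have hy : (0:ℝ) ≤ y := by
      by_contra hy
      push_neg at hy
      have : Real.exp y < 1 := by
        rw [← Real.exp_zero]; exact Real.exp_lt_exp.2 hy
      linarith
    -- rewrite RHS
    have hFx : ∀ m, F m (x m) = Real.exp (ε m * x m) := fun m =>
      indicator_of_mem (mem_Iic.2 (hxm m)) _
    have hHy : H y = Real.exp (c * y) := indicator_of_mem (mem_Ici.2 hy) _
    simp only [hFx, hHy, ← Real.exp_sum]
    rw [← Real.exp_add]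
    have hb : Real.exp y - ∑ m, Real.exp (x m + y) - 1 ≤ Real.exp y := by linarith
    calc Real.exp (εt * y + ∑ m, ε m * (x m + y)) *
          (Real.exp y - ∑ m, Real.exp (x m + y) - 1)
        ≤ Real.exp (εt * y + ∑ m, ε m * (x m + y)) * Real.exp y :=
          mul_le_mul_of_nonneg_left hb (Real.exp_pos _).le
      _ = Real.exp ((∑ m, ε m * x m) + c * y) := by
          rw [← Real.exp_add]
          congr 1
          simp only [hcdef, mul_add, Finset.sum_add_distrib, ← Finset.sum_mul]
          ring
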